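/- arXiv:1104.4427 — 2 statements merged into one kernel-verified Lean document; each statement's English description precedes it below -/
import Mathlib

section
/- Let L be a language over an alphabet Σ such that L contains only finitely many primitive words and the root √L of L is infinite. Then L is not regular. -/
/-- `wpow v n` is the word `vⁿ`, the `n`-fold concatenation of the word `v` with itself. -/
def wpow {α : Type*} (v : List α) : ℕ → List α
  | 0 => []
  | n + 1 => v ++ wpow v n

/-- A nonempty word `u` is primitive if `u = vⁿ` implies `n = 1`. -/
def Primitive {α : Type*} (u : List α) : Prop :=
  u ≠ [] ∧ ∀ (v : List α) (n : ℕ), u = wpow v n → n = 1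

/-- The root of a language: the set of primitive roots `√u` of the nonempty words `u ∈ L`. -/
def langRoot {α : Type*} (L : Language α) : Language α :=
  {p : List α | Primitive p ∧ ∃ u ∈ L, ∃ d : ℕ, 1 ≤ d ∧ u = wpow p d}

section WpowAux

variable {α : Type*}

theorem wpow_zero (v : List α) : wpow v 0 = [] := rfl

theorem wpow_succ (v : List α) (n : ℕ) : wpow v (n + 1) = v ++ wpow v n := rfl

theorem wpow_one (v : List α) : wpow v 1 = v := by
  show v ++ wpow v 0 = v
  simp [wpow_zero]

theorem length_wpow (v : List α) (n : ℕ) : (wpow v n).length = n * v.length := by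
  induction n with
  | zero => simp [wpow_zero]
  | succ n ih => rw [wpow_succ, List.length_append, ih, Nat.succ_mul]; omega

theorem wpow_nil (n : ℕ) : wpow ([] : List α) n = [] := by
  induction n with
  | zero => rfl
  | succ n ih => rw [wpow_succ, ih]; rfl

theorem wpow_add (v : List α) (a b : ℕ) : wpow v (a + b) = wpow v a ++ wpow v b := by
  induction a with
  | zero => simp [wpow_zero]
  | succ a ih =>
      have : a + 1 + b = (a + b) + 1 := by omega
      rw [this, wpow_succ, ih, wpow_succ, List.append_assoc]

theorem wpow_mul (v : List α) (a b : ℕ) : wpow v (a * b) = wpow (wpow v a) b := by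
  induction b with
  | zero => simp [wpow_zero]
  | succ b ih =>
      have : a * (b + 1) = a + a * b := by ring
      rw [this, wpow_add, ih, wpow_succ]

theorem take_wpow (v : List α) {q n : ℕ} (h : q ≤ n) :
    (wpow v n).take (q * v.length) = wpow v q := by
  rw [show n = q + (n - q) by omega, wpow_add]
  exact List.take_left' (length_wpow v q)

theorem drop_wpow (v : List α) {q n : ℕ} (h : q ≤ n) :
    (wpow v n).drop (q * v.length) = wpow v (n - q) := by
  rw [show n = q + (n - q) by omega, wpow_add]
  have := List.drop_left' (l₁ := wpow v q) (l₂ := wpow v (n - q)) (length_wpow v q)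
  rw [this]
  congr 1
  omega

theorem getElem?_wpow (v : List α) : ∀ (n i : ℕ), i < n * v.length →
    (wpow v n)[i]? = v[i % v.length]? := by
  intro n
  induction n with
  | zero => intro i h; omega
  | succ n ih =>
      intro i h
      rw [Nat.succ_mul] at h
      by_cases hi : i < v.length
      · rw [wpow_succ, List.getElem?_append_left hi, Nat.mod_eq_of_lt hi]
      · push_neg at hi
        rw [wpow_succ, List.getElem?_append_right hi, ih (i - v.length) (by omega)]
        congr 1
        conv_rhs => rw [show i = i - v.length + v.length by omega]
        rw [Nat.add_mod_right]

theorem wpow_period (t : List α) (J i : ℕ) (h : i + t.length < J * t.length) :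
    (wpow t J)[i]? = (wpow t J)[i + t.length]? := by
  rw [getElem?_wpow t J i (by omega), getElem?_wpow t J _ h, Nat.add_mod_right]

/-- Commutation: if two words commute, they are powers of a common word. -/
theorem comm_pow : ∀ (N : ℕ) (X W : List α), X.length + W.length ≤ N → X ++ W = W ++ X →
    ∃ z a b, X = wpow z a ∧ W = wpow z b := by
  intro N
  induction N with
  | zero =>
      intro X W h _
      have hX : X = [] := List.eq_nil_of_length_eq_zero (by omega)
      have hW : W = [] := List.eq_nil_of_length_eq_zero (by omega)
      exact ⟨[], 0, 0, by simp [hX, wpow_zero], by simp [hW, wpow_zero]⟩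
  | succ N ih =>
      intro X W hlen hc
      rcases eq_or_ne X [] with rfl | hX
      · exact ⟨W, 0, 1, rfl, (wpow_one W).symm⟩
      rcases eq_or_ne W [] with rfl | hW
      · exact ⟨X, 1, 0, (wpow_one X).symm, rfl⟩
      have hXpos : 0 < X.length := List.length_pos_iff.2 hX
      have hWpos : 0 < W.length := List.length_pos_iff.2 hW
      rcases le_or_gt X.length W.length with hle | hlt
      · have hXW : X = W.take X.length := by
          have h1 := congrArg (List.take X.length) hc
          rwa [List.take_left, List.take_append,
            show X.length - W.length = 0 by omega, List.take_zero, List.append_nil] at h1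
        have hWd : W = X ++ W.drop X.length := by
          conv_lhs => rw [← List.take_append_drop X.length W, ← hXW]
        set W' := W.drop X.length with hW'def
        have hc' : X ++ W' = W' ++ X := by
          have h2 : X ++ (X ++ W') = X ++ (W' ++ X) := by
            rw [← hWd, hc, hWd, List.append_assoc]
          exact List.append_cancel_left h2
        have hlen' : X.length + W'.length ≤ N := by
          have : W'.length = W.length - X.length := by simp [hW'def]
          omega
        obtain ⟨z, a, b, hXz, hW'z⟩ := ih X W' hlen' hc'
        exact ⟨z, a, a + b, hXz, by rw [hWd, wpow_add, hXz, hW'z]⟩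
      · have hWX : W = X.take W.length := by
          have h1 := congrArg (List.take W.length) hc.symm
          rwa [List.take_left, List.take_append,
            show W.length - X.length = 0 by omega, List.take_zero, List.append_nil] at h1
        have hXd : X = W ++ X.drop W.length := by
          conv_lhs => rw [← List.take_append_drop W.length X, ← hWX]
        set X' := X.drop W.length with hX'def
        have hc' : X' ++ W = W ++ X' := by
          have h2 : W ++ (X' ++ W) = W ++ (W ++ X') := by
            rw [← List.append_assoc, ← hXd, hc, hXd]
          exact List.append_cancel_left h2
        have hlen' : X'.length + W.length ≤ N := by
          have : X'.length = X.length - W.length := by simp [hX'def]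
          omega
        obtain ⟨z, a, b, hX'z, hWz⟩ := ih X' W hlen' hc'
        exact ⟨z, b + a, b, by rw [hXd, wpow_add, hX'z, hWz], hWz⟩

end WpowAux
section WpowAux2

variable {α : Type*}

/-- A primitive word is not fixed by any nontrivial rotation. -/
theorem rot_contra {p : List α} (hp : Primitive p) {ρ : ℕ} (h0 : 0 < ρ) (hρ : ρ < p.length)
    (h : ∀ j, j < p.length → p[j]? = p[(j + ρ) % p.length]?) : False := by
  set n := p.length with hn
  set s := n - ρ with hs
  set A := p.take s with hA
  set B := p.drop s with hB
  have hAlen : A.length = s := by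
    rw [hA, List.length_take]; omega
  have hBlen : B.length = ρ := by
    rw [hB, List.length_drop]; omega
  have hBA : B ++ A = p := by
    apply List.ext_getElem?
    intro j
    by_cases hj : j < n
    · have e1 : (B ++ A)[j]? = p[(j + s) % n]? := by
        by_cases hjρ : j < ρ
        · rw [List.getElem?_append_left (by omega : j < B.length), hB,
            List.getElem?_drop, show (j + s) % n = s + j by
              rw [Nat.mod_eq_of_lt (by omega)]; omega]
        · rw [List.getElem?_append_right (by omega : B.length ≤ j), hA,
            List.getElem?_take_of_lt (by omega : j - B.length < s), hBlen]
          congr 1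
          rw [show j + s = (j - ρ) + n by omega, Nat.add_mod_right,
            Nat.mod_eq_of_lt (by omega)]
      have e2 : p[(j + s) % n]? = p[j]? := by
        have h3 := h ((j + s) % n) (Nat.mod_lt _ (by omega))
        rw [h3, Nat.mod_add_mod, show j + s + ρ = j + n by omega, Nat.add_mod_right,
          Nat.mod_eq_of_lt hj]
      rw [e1, e2]
    · rw [List.getElem?_eq_none (by simp [hAlen, hBlen]; omega),
        List.getElem?_eq_none (by omega)]
  have hAB : A ++ B = p := List.take_append_drop _ _
  obtain ⟨z, a, b, hAz, hBz⟩ := comm_pow (A.length + B.length) A B le_rfl (by rw [hAB, hBA])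
  have hane : A ≠ [] := by
    intro hh; rw [hh] at hAlen; simp at hAlen; omega
  have hbne : B ≠ [] := by
    intro hh; rw [hh] at hBlen; simp at hBlen; omega
  have ha1 : 1 ≤ a := by
    rcases Nat.eq_zero_or_pos a with rfl | hpos
    · exact absurd hAz.symm (by simpa [wpow_zero] using hane.symm)
    · exact hpos
  have hb1 : 1 ≤ b := by
    rcases Nat.eq_zero_or_pos b with rfl | hpos
    · exact absurd hBz.symm (by simpa [wpow_zero] using hbne.symm)
    · exact hpos
  have hpz : p = wpow z (a + b) := by rw [← hAB, wpow_add, hAz, hBz]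
  have := hp.2 z (a + b) hpz
  omega

/-- Every nonempty word is a positive power of a primitive word. -/
theorem exists_root : ∀ (N : ℕ) (u : List α), u.length ≤ N → u ≠ [] →
    ∃ y c, Primitive y ∧ 1 ≤ c ∧ u = wpow y c := by
  intro N
  induction N with
  | zero =>
      intro u h hne
      exact absurd (List.eq_nil_of_length_eq_zero (by omega)) hne
  | succ N ih =>
      intro u hlen hne
      by_cases hp : Primitive u
      · exact ⟨u, 1, hp, le_rfl, (wpow_one u).symm⟩
      · rw [Primitive, not_and_or] at hp
        rcases hp with h1 | h2
        · exact absurd hne (by simpa using h1)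
        push_neg at h2
        obtain ⟨v, n, huv, hn1⟩ := h2
        have hn0 : n ≠ 0 := by
          rintro rfl; exact hne huv
        have hv : v ≠ [] := by
          rintro rfl; rw [wpow_nil] at huv; exact hne huv
        have hvpos : 0 < v.length := List.length_pos_iff.2 hv
        have hn2 : 2 ≤ n := by omega
        have hulen : u.length = n * v.length := by rw [huv, length_wpow]
        have h2v : 2 * v.length ≤ n * v.length := Nat.mul_le_mul_right _ hn2
        have hvlen : v.length ≤ N := by omega
        obtain ⟨y, c, hy, hc, hvy⟩ := ih v hvlen hv
        refine ⟨y, c * n, hy, ?_, ?_⟩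
        · have : 1 * 1 ≤ c * n := Nat.mul_le_mul hc (by omega)
          omega
        · rw [huv, hvy, wpow_mul]

/-- Conjugation transports powers. -/
theorem rot_pow {Y X t : List α} {J : ℕ} (h : Y ++ X = wpow t J) :
    ∃ t', t'.length = t.length ∧ X ++ Y = wpow t' J := by
  rcases eq_or_ne t [] with rfl | ht
  · rw [wpow_nil] at h
    rw [List.append_eq_nil_iff] at h
    exact ⟨[], rfl, by rw [h.1, h.2, wpow_nil]; rfl⟩
  have hm : 0 < t.length := List.length_pos_iff.2 ht
  set q := Y.length / t.length with hq
  set ρ := Y.length % t.length with hρ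
  have hYlen : Y.length = q * t.length + ρ := by
    rw [hq, hρ, Nat.mul_comm]; exact (Nat.div_add_mod _ _).symm
  have hρm : ρ < t.length := Nat.mod_lt _ hm
  have htotal : Y.length + X.length = J * t.length := by
    have h1 := congrArg List.length h
    rw [List.length_append, length_wpow] at h1
    exact h1
  have hqJ : q ≤ J := by
    by_contra hh
    push_neg at hh
    have : J * t.length + t.length ≤ q * t.length := by
      have := Nat.mul_le_mul_right t.length hh
      rw [Nat.succ_mul] at this
      omega
    omega
  rcases Nat.eq_zero_or_pos ρ with hρ0 | hρpos
  · have hY : Y = wpow t q := by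
      have h1 : Y = (wpow t J).take Y.length := by rw [← h, List.take_left]
      rw [h1, show Y.length = q * t.length by omega, take_wpow t hqJ]
    have hX : X = wpow t (J - q) := by
      have h1 : X = (wpow t J).drop Y.length := by rw [← h, List.drop_left]
      rw [h1, show Y.length = q * t.length by omega, drop_wpow t hqJ]
    exact ⟨t, rfl, by rw [hX, hY, ← wpow_add, show J - q + q = J by omega]⟩
  · have hqJ' : q < J := by
      by_contra hh
      push_neg at hh
      have : J * t.length ≤ q * t.length := Nat.mul_le_mul_right t.length hh
      omega
    set t₁ := t.take ρ with ht₁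
    set t₂ := t.drop ρ with ht₂
    have ht₁₂ : t₁ ++ t₂ = t := List.take_append_drop _ _
    have ht₁len : t₁.length = ρ := by rw [ht₁, List.length_take]; omega
    have ht₂len : t₂.length = t.length - ρ := by rw [ht₂, List.length_drop]
    have hsplit : wpow t J = wpow t q ++ (t ++ wpow t (J - q - 1)) := by
      rw [← wpow_succ, ← wpow_add, show q + (J - q - 1 + 1) = J by omega]
    have hY : Y = wpow t q ++ t₁ := by
      have h1 : Y = (wpow t J).take Y.length := by rw [← h, List.take_left]
      rw [hsplit, List.take_append,
        List.take_of_length_le (by rw [length_wpow]; omega),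
        length_wpow] at h1
      rw [show Y.length - q * t.length = ρ by omega, List.take_append,
        show ρ - t.length = 0 by omega, List.take_zero, List.append_nil] at h1
      exact h1
    have hX : X = t₂ ++ wpow t (J - q - 1) := by
      have h1 : X = (wpow t J).drop Y.length := by rw [← h, List.drop_left]
      rw [hsplit, List.drop_append,
        List.drop_eq_nil_of_le (by rw [length_wpow]; omega),
        length_wpow] at h1
      rw [show Y.length - q * t.length = ρ by omega, List.drop_append,
        show ρ - t.length = 0 by omega, List.drop_zero, List.nil_append] at h1
      exact h1
    have hid : ∀ j : ℕ, t₂ ++ (wpow t j ++ t₁) = wpow (t₂ ++ t₁) (j + 1) := by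
      intro j
      induction j with
      | zero => rw [wpow_zero, List.nil_append, wpow_one]
      | succ j ihj =>
          rw [wpow_succ t j, wpow_succ (t₂ ++ t₁) (j + 1), ← ihj, ← ht₁₂]
          simp [List.append_assoc]
    refine ⟨t₂ ++ t₁, by rw [List.length_append]; omega, ?_⟩
    rw [hX, hY, show (t₂ ++ wpow t (J - q - 1)) ++ (wpow t q ++ t₁)
        = t₂ ++ (wpow t (J - q - 1 + q) ++ t₁) by rw [wpow_add]; simp [List.append_assoc],
      hid, show J - q - 1 + q + 1 = J by omega]

end WpowAux2
section WpowAux3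

variable {α : Type*}

/-- A power of a primitive word cannot be a power of a strictly shorter nonempty word. -/
theorem power_eq_power_contra {p z : List α} (hp : Primitive p) {d J : ℕ} (hd : 1 ≤ d)
    (hz : z ≠ []) (hlt : z.length < p.length) (h : wpow p d = wpow z J) : False := by
  have hτ : 0 < z.length := List.length_pos_iff.2 hz
  have hn : 0 < p.length := by omega
  have hlen : d * p.length = J * z.length := by
    have h1 := congrArg List.length h
    rw [length_wpow, length_wpow] at h1
    exact h1
  rcases eq_or_lt_of_le hd with hd1 | hd2
  · rw [← hd1, wpow_one] at h
    have hJ1 := hp.2 z J h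
    rw [hJ1, wpow_one] at h
    rw [h] at hlt
    omega
  · have h2n : 2 * p.length ≤ d * p.length := Nat.mul_le_mul_right _ hd2
    have hnd : p.length ≤ d * p.length := by omega
    have key : ∀ j, j < p.length → p[j]? = p[(j + z.length) % p.length]? := by
      intro j hj
      have h1 : p[j]? = (wpow p d)[j]? := by
        rw [getElem?_wpow p d j (by omega), Nat.mod_eq_of_lt hj]
      have h2 : (wpow z J)[j]? = (wpow z J)[j + z.length]? :=
        wpow_period z J j (by omega)
      have h3 : (wpow p d)[j + z.length]? = p[(j + z.length) % p.length]? :=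
        getElem?_wpow p d _ (by omega)
      rw [h1, h, h2, ← h, h3]
    exact rot_contra hp hτ hlt key

/-- Main combinatorial lemma: if `u · yᴷ` is a proper power and `K` is large enough,
then `u` is a power of the primitive word `y`. -/
theorem ml {y u t : List α} {K J : ℕ} (hy : Primitive y)
    (hK : u.length + 2 * y.length ≤ K * y.length) (hJ : 2 ≤ J)
    (hwt : u ++ wpow y K = wpow t J) :
    ∃ j, u = wpow y j := by
  have hynil := hy.1
  have hm : 0 < y.length := List.length_pos_iff.2 hynil
  have hlen : J * t.length = u.length + K * y.length := by
    have h1 := congrArg List.length hwt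
    rw [List.length_append, length_wpow, length_wpow] at h1
    exact h1.symm
  have hKm : 2 * y.length ≤ K * y.length := by omega
  have hlam_le : t.length + y.length ≤ K * y.length := by
    have h2l : 2 * t.length ≤ J * t.length := Nat.mul_le_mul_right _ hJ
    omega
  have hlam_pos : 0 < t.length := by
    rcases Nat.eq_zero_or_pos t.length with h0 | h
    · rw [h0, Nat.mul_zero] at hlen; omega
    · exact h
  have key : ∀ j, j < y.length → y[j]? = y[(j + t.length % y.length) % y.length]? := by
    intro j hj
    have hjY : (wpow y K)[j]? = y[j]? := by
      rw [getElem?_wpow y K j (by omega), Nat.mod_eq_of_lt hj]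
    have hw1 : (u ++ wpow y K)[u.length + j]? = (wpow y K)[j]? := by
      rw [List.getElem?_append_right (by omega : u.length ≤ u.length + j)]
      congr 1
      omega
    have hw2 : (u ++ wpow y K)[u.length + (j + t.length)]? = (wpow y K)[j + t.length]? := by
      rw [List.getElem?_append_right (by omega : u.length ≤ u.length + (j + t.length))]
      congr 1
      omega
    have hper : (u ++ wpow y K)[u.length + j]? = (u ++ wpow y K)[u.length + j + t.length]? := by
      rw [hwt]
      exact wpow_period t J _ (by omega)
    have hY2 : (wpow y K)[j + t.length]? = y[(j + t.length) % y.length]? :=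
      getElem?_wpow y K _ (by omega)
    have hmain : y[j]? = y[(j + t.length) % y.length]? := by
      rw [← hjY, ← hw1, hper, show u.length + j + t.length = u.length + (j + t.length) by omega,
        hw2, hY2]
    have e : t.length % y.length + y.length * (t.length / y.length) = t.length :=
      Nat.mod_add_div _ _
    rw [show j + t.length = j + t.length % y.length + y.length * (t.length / y.length) by omega,
      Nat.add_mul_mod_self_left] at hmain
    exact hmain
  have hdvd : y.length ∣ t.length := by
    by_contra hnd
    have hρpos : 0 < t.length % y.length :=
      Nat.pos_of_ne_zero (fun h0 => hnd (Nat.dvd_of_mod_eq_zero h0))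
    exact rot_contra hy hρpos (Nat.mod_lt _ hm) key
  obtain ⟨c, hc⟩ := hdvd
  have hc1 : 1 ≤ c := by
    rcases Nat.eq_zero_or_pos c with rfl | h
    · rw [Nat.mul_zero] at hc; omega
    · exact h
  have hcm : c * y.length = t.length := by rw [Nat.mul_comm]; exact hc.symm
  have hKc : c ≤ K := by
    have h1 : c * y.length ≤ K * y.length := by omega
    exact Nat.le_of_mul_le_mul_right h1 hm
  have ht : t = wpow y c := by
    have h1 : t = (wpow t J).drop ((J - 1) * t.length) := by
      rw [drop_wpow t (by omega : J - 1 ≤ J), show J - (J - 1) = 1 by omega, wpow_one]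
    rw [← hwt] at h1
    have harith : (J - 1) * t.length = u.length + (K - c) * y.length := by
      have e1 : (J - 1) * t.length = J * t.length - t.length := by
        rw [Nat.sub_mul, Nat.one_mul]
      have e2 : (K - c) * y.length = K * y.length - c * y.length := Nat.sub_mul _ _ _
      omega
    rw [harith, List.drop_append,
      List.drop_eq_nil_of_le (by omega : u.length ≤ u.length + (K - c) * y.length),
      show u.length + (K - c) * y.length - u.length = (K - c) * y.length by omega,
      List.nil_append, drop_wpow y (by omega : K - c ≤ K),
      show K - (K - c) = c by omega] at h1
    exact h1
  have hwyc : u ++ wpow y K = wpow y (c * J) := by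
    rw [hwt, ht, ← wpow_mul]
  have hKcJ : K * y.length ≤ c * J * y.length := by
    have e2 : c * J * y.length = J * t.length := by rw [← hcm]; ring
    omega
  have hKcJ' : K ≤ c * J := Nat.le_of_mul_le_mul_right hKcJ hm
  have hulen : u.length = (c * J - K) * y.length := by
    have e : (c * J - K) * y.length = c * J * y.length - K * y.length := Nat.sub_mul _ _ _
    have e2 : c * J * y.length = J * t.length := by rw [← hcm]; ring
    omega
  refine ⟨c * J - K, ?_⟩
  have h1 : u = (wpow y (c * J)).take u.length := by
    rw [← hwyc, List.take_left]
  rw [h1, hulen, take_wpow y (by omega : c * J - K ≤ c * J)]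

end WpowAux3
section MainAux

variable {α : Type*}

theorem flatten_replicate (b : List α) (k : ℕ) :
    (List.replicate k b).flatten = wpow b k := by
  induction k with
  | zero => rfl
  | succ k ih => rw [List.replicate_succ, List.flatten_cons, ih, wpow_succ]

end MainAux

/-- A language containing only finitely many primitive words and having an infinite root
is not regular. -/
theorem not_regular_of_finitely_many_primitive_infinite_root {α : Type*} (L : Language α)
    (hfin : Set.Finite {w : List α | w ∈ L ∧ Primitive w})
    (hroot : Set.Infinite (langRoot L)) :
    ¬ L.IsRegular := by
  rintro ⟨σ, hfσ, M, hM⟩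
  haveI := hfσ
  classical
  set N := Fintype.card σ with hN
  by_cases hbig : ∃ p ∈ langRoot L, N < p.length
  · -- Case A : the root contains a word longer than the number of states
    obtain ⟨p, hpmem, hplen⟩ := hbig
    obtain ⟨hp, W, hWL, d, hd, hWp⟩ := hpmem
    have hn : 0 < p.length := List.length_pos_iff.2 hp.1
    have hWacc : wpow p d ∈ M.accepts := by rw [hM, ← hWp]; exact hWL
    have hlenW : N ≤ (wpow p d).length := by
      rw [length_wpow]
      have : 1 * p.length ≤ d * p.length := Nat.mul_le_mul_right _ hd
      omega
    obtain ⟨a, b, c, hsplit, hab, hbne, hpump⟩ := M.pumping_lemma hWacc hlenW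
    obtain ⟨y₀, c₀, hy₀, hc₀, hby⟩ := exists_root b.length b le_rfl hbne
    have hm₀ : 0 < y₀.length := List.length_pos_iff.2 hy₀.1
    have hblen : b.length = c₀ * y₀.length := by rw [hby, length_wpow]
    have hbpos : 0 < b.length := List.length_pos_iff.2 hbne
    have hy₀b : y₀.length ≤ b.length := by
      rw [hblen]; exact Nat.le_mul_of_pos_left _ hc₀
    have hmem : ∀ k, a ++ (wpow b k ++ c) ∈ L := by
      intro k
      rw [← hM]
      apply hpump
      refine Language.mem_mul.2 ?_
      refine ⟨a ++ wpow b k, ?_, c, rfl, by rw [List.append_assoc]⟩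
      rw [Language.mem_mul]
      refine ⟨a, rfl, wpow b k, ?_, rfl⟩
      rw [Language.mem_kstar]
      refine ⟨List.replicate k b, (flatten_replicate b k).symm, ?_⟩
      intro y hy
      rw [List.eq_of_mem_replicate hy]; rfl
    set K₀ := c.length + a.length + 2 * b.length + 2 with hK₀
    have hprim : ∀ k, K₀ ≤ k → Primitive (a ++ (wpow b k ++ c)) := by
      intro k hk
      have hklb : k ≤ k * b.length := Nat.le_mul_of_pos_right _ hbpos
      constructor
      · intro hemp
        have hlen0 := congrArg List.length hemp
        simp only [List.length_append, length_wpow, List.length_nil] at hlen0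
        omega
      · intro t J hwt
        by_contra hJne
        have hJ0 : J ≠ 0 := by
          rintro rfl
          rw [wpow_zero] at hwt
          have hlen0 := congrArg List.length hwt
          simp only [List.length_append, length_wpow, List.length_nil] at hlen0
          omega
        have hJ2 : 2 ≤ J := by omega
        obtain ⟨t', ht'len, ht'⟩ := rot_pow (Y := a ++ wpow b k) (X := c) (t := t) (J := J)
          (by rw [List.append_assoc]; exact hwt)
        have hty : (c ++ a) ++ wpow y₀ (c₀ * k) = wpow t' J := by
          rw [wpow_mul, ← hby, List.append_assoc]
          exact ht'
        have hKcond : (c ++ a).length + 2 * y₀.length ≤ c₀ * k * y₀.length := by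
          have e : c₀ * k * y₀.length = k * b.length := by rw [hblen]; ring
          rw [List.length_append]
          omega
        obtain ⟨j, hj⟩ := ml hy₀ hKcond hJ2 hty
        have hrot2 : c ++ (a ++ b) = wpow y₀ (j + c₀) := by
          rw [← List.append_assoc, hj, hby, ← wpow_add]
        obtain ⟨z, hzlen, hz⟩ := rot_pow hrot2
        have hzne : z ≠ [] := by
          intro hh
          rw [hh] at hzlen
          simp only [List.length_nil] at hzlen
          omega
        have hzlt : z.length < p.length := by omega
        exact power_eq_power_contra hp hd hzne hzlt (hsplit.trans hz)
    have hinf : {w : List α | w ∈ L ∧ Primitive w}.Infinite := by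
      refine Set.infinite_of_injective_forall_mem
        (f := fun i : ℕ => a ++ (wpow b (K₀ + i) ++ c)) ?_ ?_
      · intro i i' hii
        have hlen2 := congrArg List.length hii
        simp only [List.length_append, length_wpow] at hlen2
        have := Nat.eq_of_mul_eq_mul_right hbpos
          (show (K₀ + i) * b.length = (K₀ + i') * b.length by omega)
        omega
      · intro i
        exact ⟨hmem _, hprim _ (by omega)⟩
    exact hfin.not_infinite hinf
  · -- Case B : all roots are short
    push_neg at hbig
    set R : Set (List α) := langRoot L with hR
    have hRinf : R.Infinite := hroot
    have hbig' : ∀ p ∈ R, p.length ≤ N := hbig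
    haveI : Infinite ↥R := hRinf.to_subtype
    set φ : ↥R → (σ → σ) × Fin (N + 1) := fun w =>
      (fun q => M.evalFrom q (w : List α), ⟨(w : List α).length, by
        have := hbig' (w : List α) w.2; omega⟩) with hφ
    obtain ⟨gl, hgl⟩ := Finite.exists_infinite_fiber φ
    set g := gl.1 with hg
    set ℓ := (gl.2 : ℕ) with hℓ
    set S : Set (List α) := {w | w ∈ R ∧ (∀ q, M.evalFrom q w = g q) ∧ w.length = ℓ}
      with hS
    have hSinf : S.Infinite := by
      have h1 : (φ ⁻¹' {gl}).Infinite := Set.infinite_coe_iff.mp hgl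
      have h2 := h1.image (Subtype.val_injective.injOn)
      refine Set.Infinite.mono ?_ h2
      rintro _ ⟨x, hx, rfl⟩
      have hx1 : φ x = gl := hx
      refine ⟨x.2, ?_, ?_⟩
      · intro q
        exact congrFun (congrArg Prod.fst hx1) q
      · exact congrArg (fun z => ((z.2 : Fin (N + 1)) : ℕ)) hx1
    obtain ⟨u, huS⟩ := hSinf.nonempty
    obtain ⟨huroot, hgu, hulen⟩ := huS
    obtain ⟨hup, Wu, hWuL, d, hd, hWu⟩ := huroot
    have hℓpos : 0 < ℓ := by rw [← hulen]; exact List.length_pos_iff.2 hup.1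
    have hiter : ∀ k q, M.evalFrom q (wpow u k) = g^[k] q := by
      intro k
      induction k with
      | zero => intro q; rfl
      | succ k ih =>
          intro q
          rw [wpow_succ, DFA.evalFrom_of_append, hgu q, ih,
            ← Function.iterate_succ_apply g k q]
    have haccd : g^[d] M.start ∈ M.accept := by
      have h1 : wpow u d ∈ M.accepts := by rw [hM, ← hWu]; exact hWuL
      rw [DFA.mem_accepts] at h1
      have h2 : M.eval (wpow u d) = g^[d] M.start := hiter d M.start
      rwa [h2] at h1
    have hmemB : ∀ w', w' ∈ S → wpow u (d - 1) ++ w' ∈ L := by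
      intro w' hw'
      rw [← hM, DFA.mem_accepts]
      have e1 : M.eval (wpow u (d - 1) ++ w') = M.evalFrom (g^[d - 1] M.start) w' := by
        show M.evalFrom M.start (wpow u (d - 1) ++ w') = _
        rw [DFA.evalFrom_of_append, hiter]
      have e2 : M.evalFrom (g^[d - 1] M.start) w' = g (g^[d - 1] M.start) := hw'.2.1 _
      rw [e1, e2, ← Function.iterate_succ_apply' g (d - 1) M.start,
        show (d - 1).succ = d by omega]
      exact haccd
    rcases eq_or_lt_of_le hd with hd1 | hd2
    · -- d = 1 : S itself consists of primitive words of L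
      have hsub : S ⊆ {w : List α | w ∈ L ∧ Primitive w} := by
        intro w' hw'
        have h1 := hmemB w' hw'
        rw [← hd1, show (1 : ℕ) - 1 = 0 from rfl, wpow_zero, List.nil_append] at h1
        exact ⟨h1, hw'.1.1⟩
      exact hfin.not_infinite (hSinf.mono hsub)
    · -- 2 ≤ d
      set A := wpow u (d - 1) with hA
      have hAlen : A.length = (d - 1) * ℓ := by rw [hA, length_wpow, hulen]
      have hdl : (d - 1) * ℓ + ℓ = d * ℓ := by
        have e1 : (d - 1) * ℓ = d * ℓ - 1 * ℓ := Nat.sub_mul _ _ _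
        have h2 : ℓ ≤ d * ℓ := Nat.le_mul_of_pos_left _ (by omega)
        omega
      set Bad : Set (List α) := {w' | w' ∈ S ∧ ¬ Primitive (A ++ w')} with hBad
      have hBadfin : Bad.Finite := by
        have hfin2 : ((fun P : ℕ × ℕ => (wpow (A.take P.1) P.2).drop ((d - 1) * ℓ)) ''
            (Set.Iic (d * ℓ) ×ˢ Set.Iic (d * ℓ))).Finite :=
          (((Set.finite_Iic (d * ℓ)).prod (Set.finite_Iic (d * ℓ)))).image _
        apply hfin2.subset
        rintro w' ⟨hw'S, hw'np⟩
        have hw'len : w'.length = ℓ := hw'S.2.2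
        have hwlen : (A ++ w').length = d * ℓ := by
          rw [List.length_append, hAlen, hw'len, hdl]
        have hwne : A ++ w' ≠ [] := by
          intro hh
          have h0 := congrArg List.length hh
          rw [hwlen, List.length_nil] at h0
          have h1 : ℓ ≤ d * ℓ := Nat.le_mul_of_pos_left _ (by omega)
          omega
        rw [Primitive, not_and_or] at hw'np
        rcases hw'np with h1 | h2
        · exact absurd hwne (by simpa using h1)
        push_neg at h2
        obtain ⟨t, J, hwt, hJ1⟩ := h2
        have hJ0 : J ≠ 0 := by rintro rfl; rw [wpow_zero] at hwt; exact hwne hwt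
        have hJ2 : 2 ≤ J := by omega
        have htne : t ≠ [] := by rintro rfl; rw [wpow_nil] at hwt; exact hwne hwt
        have htpos : 0 < t.length := List.length_pos_iff.2 htne
        have hlent : J * t.length = d * ℓ := by
          rw [← hwlen, hwt, length_wpow]
        have h2l : 2 * t.length ≤ J * t.length := Nat.mul_le_mul_right _ hJ2
        have h2ℓ : 2 * ℓ ≤ d * ℓ := Nat.mul_le_mul_right _ hd2
        have hlam_le : t.length ≤ (d - 1) * ℓ := by omega
        have ht : t = A.take t.length := by
          have h3 : t = (A ++ w').take t.length := by
            rw [hwt, show J = 1 + (J - 1) by omega, wpow_add, wpow_one, List.take_left]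
          have h4 : (A ++ w').take t.length = A.take t.length := by
            rw [List.take_append,
              show t.length - A.length = 0 by omega, List.take_zero, List.append_nil]
          exact h3.trans h4
        have hw'eq : w' = (wpow t J).drop ((d - 1) * ℓ) := by
          rw [← hwt]
          exact (List.drop_left' hAlen).symm
        refine ⟨(t.length, J), ⟨?_, ?_⟩, ?_⟩
        · simp only [Set.mem_Iic]; omega
        · simp only [Set.mem_Iic]
          have : J ≤ J * t.length := Nat.le_mul_of_pos_right _ htpos
          omega
        · show (wpow (A.take t.length) J).drop ((d - 1) * ℓ) = w'
          rw [← ht]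
          exact hw'eq.symm
      have hGinf : (S \ Bad).Infinite := hSinf.diff hBadfin
      have himg := hGinf.image (f := fun w' => A ++ w')
        (fun x _ y _ h => List.append_cancel_left h)
      have hsub2 : (fun w' => A ++ w') '' (S \ Bad) ⊆ {w : List α | w ∈ L ∧ Primitive w} := by
        rintro _ ⟨w', ⟨hw'S, hw'nb⟩, rfl⟩
        refine ⟨hmemB w' hw'S, ?_⟩
        by_contra hnp
        exact hw'nb ⟨hw'S, hnp⟩
      exact hfin.not_infinite (Set.Infinite.mono hsub2 himg)
end

section
/- Let Σ be an alphabet with at least two distinct letters. Then the set Q of all primitive words over Σ is not a regular language. -/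
lemma wpow_length {α : Type*} (v : List α) (n : ℕ) :
    (wpow v n).length = n * v.length := by
  induction n with
  | zero => simp [wpow]
  | succ n ih => simp [wpow, ih]; ring

lemma wpow_count {α : Type*} [DecidableEq α] (b : α) (v : List α) (n : ℕ) :
    (wpow v n).count b = n * v.count b := by
  induction n with
  | zero => simp [wpow]
  | succ n ih => simp [wpow, ih]; ring

lemma wpow_replicate {α : Type*} (a : α) (n : ℕ) :
    wpow [a] n = List.replicate n a := by
  induction n with
  | zero => rfl
  | succ n ih => simp [wpow, ih, List.replicate_succ]

/-- A word `a^m b a^n b` with `n < m` is primitive. -/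
lemma prim_key {α : Type*} (a b : α) (hab : a ≠ b) (m n : ℕ) (hmn : n < m) :
    Primitive (List.replicate m a ++ [b] ++ List.replicate n a ++ [b]) := by
  classical
  set w : List α := List.replicate m a ++ [b] ++ List.replicate n a ++ [b] with hw
  have hwne : w ≠ [] := by simp [hw]
  have hcount : w.count b = 2 := by
    simp [hw, List.count_replicate, hab]
  have hlen : w.length = m + n + 2 := by simp [hw]; ring
  refine ⟨hwne, fun v k hk => ?_⟩
  have hc : 2 = k * v.count b := by rw [hcount.symm, hk, wpow_count]
  -- k ≠ 0
  have hk0 : k ≠ 0 := by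
    rintro rfl
    exact hwne (by simpa [wpow] using hk)
  by_contra hk1
  -- then k ≥ 2 and count b v ≥ 1, so k = 2, count = 1
  have hcv : v.count b ≠ 0 := by
    intro h0; rw [h0] at hc; simp at hc
  have hk2 : k = 2 := by
    have hdvd : k ∣ 2 := ⟨v.count b, hc⟩
    have := Nat.le_of_dvd (by norm_num) hdvd
    omega
  subst hk2
  have hcv1 : v.count b = 1 := by omega
  -- w = v ++ v
  have hvv : w = v ++ v := by simpa [wpow] using hk
  have hlv : 2 * v.length = m + n + 2 := by
    have := congrArg List.length hvv
    simp [hlen] at this; omega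
  have hvm : v.length ≤ m := by omega
  -- v is the prefix of w of length v.length, all a's
  have hv : v = List.replicate v.length a := by
    have h1 : (v ++ v).take v.length = v := List.take_left
    rw [← hvv, hw] at h1
    rw [← h1]
    rw [List.append_assoc, List.append_assoc,
      List.take_append_of_le_length (by simpa using hvm),
      List.take_replicate, Nat.min_eq_left hvm]
    simp
  rw [hv] at hcv1
  simp [List.count_replicate, hab] at hcv1

/-- Over an alphabet with at least two distinct letters, the set `Q` of all primitive
words is not a regular language. -/
theorem primitive_words_not_regular {α : Type*} (a b : α) (hab : a ≠ b) :
    ¬ Language.IsRegular ({w : List α | Primitive w} : Language α) := by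
  classical
  rintro ⟨σ, hfin, M, hM⟩
  set p := Fintype.card σ with hp
  let M' : DFA α σ := ⟨M.step, M.start, M.acceptᶜ⟩
  have hM' : ∀ y : List α, y ∈ M'.accepts ↔ ¬ Primitive y := by
    intro y
    rw [DFA.mem_accepts]
    show M.eval y ∈ M.acceptᶜ ↔ _
    rw [Set.mem_compl_iff, ← DFA.mem_accepts, hM]
    exact Iff.rfl
  set x : List α := List.replicate p a ++ [b] ++ List.replicate p a ++ [b] with hx
  have hxnp : ¬ Primitive x := by
    intro hprim
    have h2 : x = wpow (List.replicate p a ++ [b]) 2 := by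
      simp [hx, wpow, List.append_assoc]
    exact absurd (hprim.2 _ 2 h2) (by norm_num)
  have hxlen : p ≤ x.length := by simp [hx]
  have hxM' : x ∈ M'.accepts := (hM' x).2 hxnp
  obtain ⟨u, v, w, hsplit, hle, hvne, hpump⟩ := M'.pumping_lemma hxM' hxlen
  set k := u.length with hk
  set l := v.length with hl
  have hl1 : 1 ≤ l := List.length_pos_iff.mpr hvne
  have hklp : k + l ≤ p := hle
  -- u ++ v is all a's
  have huv : u ++ v = List.replicate (k + l) a := by
    have h1 : x.take (k + l) = u ++ v := by
      rw [hsplit, ← (List.length_append : (u ++ v).length = u.length + v.length)]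
      exact List.take_left
    rw [← h1, hx, List.append_assoc, List.append_assoc,
      List.take_append_of_le_length (by simpa using hklp),
      List.take_replicate, Nat.min_eq_left hklp]
  have hu : u = List.replicate k a := by
    have := congrArg (List.take k) huv
    rwa [List.take_left, List.take_replicate, Nat.min_eq_left (by omega)] at this
  have hv : v = List.replicate l a := by
    have := congrArg (List.drop k) huv
    rwa [List.drop_left, List.drop_replicate, Nat.add_sub_cancel_left] at this
  have hwv : w = List.replicate (p - (k + l)) a ++ ([b] ++ (List.replicate p a ++ [b])) := by
    have h1 : x.drop (k + l) = w := by
      rw [hsplit, ← (List.length_append : (u ++ v).length = u.length + v.length)]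
      exact List.drop_left
    rw [← h1, hx, List.append_assoc, List.append_assoc,
      List.drop_append_of_le_length (by simpa using hklp),
      List.drop_replicate]
  -- the pumped word
  have hymem : u ++ (v ++ v) ++ w ∈ M'.accepts := by
    apply hpump
    refine Language.append_mem_mul (Language.append_mem_mul rfl ?_) rfl
    have h2 : ([v, v] : List (List α)).flatten ∈ KStar.kstar ({v} : Language α) :=
      Language.join_mem_kstar (by intro y hy; simp at hy; subst hy; rfl)
    simpa using h2
  have hyform : u ++ (v ++ v) ++ w
      = List.replicate (p + l) a ++ [b] ++ List.replicate p a ++ [b] := by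
    rw [hu, hv, hwv]
    simp only [List.append_assoc, ← List.replicate_add]
    rw [← List.append_assoc, ← List.replicate_add]
    congr 2
    omega
  have hyprim : Primitive (u ++ (v ++ v) ++ w) := by
    rw [hyform]
    exact prim_key a b hab (p + l) p (by omega)
  exact (hM' _).1 hymem hyprim
end
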